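/- Let f : ℝ^{d×N} → [-∞,+∞] be coercive, i.e. f(ξ) → +∞ as |ξ| → +∞. Then for every λ ∈ ℝ, the closure of L_λ(f^{lc}) is contained in co(L_λ(f^{ls})); in particular, L_λ(f^{lc}) ⊆ co( ⋂_{ε>0} closure(L_{λ+ε}(f)) ). -/

import Mathlib

open Filter Topology

variable {X : Type*}

/-- A function into the extended reals is level convex if along segments its value
is at most the maximum of the values at the endpoints. -/
def LevelConvex [AddCommGroup X] [Module ℝ X] (F : X → EReal) : Prop :=
  ∀ x y : X, ∀ t : ℝ, 0 < t → t < 1 →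
    F (t • x + (1 - t) • y) ≤ max (F x) (F y)

/-- The lower semicontinuous envelope `Γ_τ(F)`: the pointwise supremum of all
lower semicontinuous functions below `F`. -/
noncomputable def lscEnv [TopologicalSpace X] (F : X → EReal) : X → EReal :=
  fun x => ⨆ G : {G : X → EReal // LowerSemicontinuous G ∧ G ≤ F}, (G : X → EReal) x

/-- The level convex envelope `F^{lc}`: the pointwise supremum of all level convex
functions below `F`. -/
noncomputable def lcEnv [AddCommGroup X] [Module ℝ X] (F : X → EReal) : X → EReal :=
  fun x => ⨆ G : {G : X → EReal // LevelConvex G ∧ G ≤ F}, (G : X → EReal) x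

/-- The lower semicontinuous level convex envelope `F^{lslc}`: the pointwise supremum
of all functions below `F` which are both lower semicontinuous and level convex. -/
noncomputable def lslcEnv [TopologicalSpace X] [AddCommGroup X] [Module ℝ X]
    (F : X → EReal) : X → EReal :=
  fun x => ⨆ G : {G : X → EReal // LowerSemicontinuous G ∧ LevelConvex G ∧ G ≤ F},
    (G : X → EReal) x

section Helpers

open scoped Classical

variable {E : Type*}

lemma le_lscEnv' [TopologicalSpace E] {F G : E → EReal} (hG : LowerSemicontinuous G)
    (hGF : G ≤ F) : G ≤ lscEnv F := fun x =>
  le_iSup (fun H : {H : E → EReal // LowerSemicontinuous H ∧ H ≤ F} => (H : E → EReal) x)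
    ⟨G, hG, hGF⟩

lemma lscEnv_le' [TopologicalSpace E] (F : E → EReal) : lscEnv F ≤ F := fun x =>
  iSup_le fun H => H.2.2 x

lemma lscEnv_lsc' [TopologicalSpace E] (F : E → EReal) : LowerSemicontinuous (lscEnv F) :=
  lowerSemicontinuous_iSup fun H : {H : E → EReal // LowerSemicontinuous H ∧ H ≤ F} => H.2.1

lemma le_lcEnv' [AddCommGroup E] [Module ℝ E] {F G : E → EReal} (hG : LevelConvex G)
    (hGF : G ≤ F) : G ≤ lcEnv F := fun x =>
  le_iSup (fun H : {H : E → EReal // LevelConvex H ∧ H ≤ F} => (H : E → EReal) x)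
    ⟨G, hG, hGF⟩

/-- The indicator-type function which is `⊥` on `A` and `c` off `A` is level convex
whenever `A` is convex. -/
lemma levelConvex_indicator [AddCommGroup E] [Module ℝ E] {A : Set E} (hA : Convex ℝ A)
    (c : EReal) : LevelConvex (fun x => if x ∈ A then (⊥ : EReal) else c) := by
  intro x y t ht ht1
  by_cases hxy : x ∈ A ∧ y ∈ A
  · have hmem : t • x + (1 - t) • y ∈ A :=
      hA hxy.1 hxy.2 ht.le (by linarith) (by ring)
    simp [hmem]
  · have h1 : (if (t • x + (1 - t) • y) ∈ A then (⊥ : EReal) else c) ≤ c := by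
      split <;> simp
    refine h1.trans ?_
    rcases not_and_or.1 hxy with h | h
    · exact le_max_of_le_left (by simp [h])
    · exact le_max_of_le_right (by simp [h])

/-- The indicator-type function which is `⊥` on `A` and `c` off `A` is lower
semicontinuous whenever `A` is closed. -/
lemma lsc_indicator [TopologicalSpace E] {A : Set E} (hA : IsClosed A) (c : EReal) :
    LowerSemicontinuous (fun x => if x ∈ A then (⊥ : EReal) else c) := by
  intro x y hy
  by_cases hx : x ∈ A
  · simp only [hx, if_true] at hy
    exact absurd hy (by simp)
  · simp only [hx, if_false] at hy
    filter_upwards [hA.isOpen_compl.mem_nhds hx] with z hz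
    simp only [Set.mem_compl_iff] at hz
    simp [hz, hy]

/-- The level convex envelope is level convex. -/
lemma lcEnv_levelConvex' [AddCommGroup E] [Module ℝ E] (F : E → EReal) :
    LevelConvex (lcEnv F) := by
  intro x y t ht ht1
  refine iSup_le fun H => le_trans (H.2.1 x y t ht ht1) (max_le_max ?_ ?_) <;>
    exact le_iSup (fun H : {H : E → EReal // LevelConvex H ∧ H ≤ F} => (H : E → EReal) _) H

/-- If `a ≤ lam + ε` in `EReal` for every `ε > 0` then `a ≤ lam`. -/
lemma EReal.le_coe_of_forall_add {a : EReal} {lam : ℝ}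
    (h : ∀ ε : ℝ, 0 < ε → a ≤ ((lam + ε : ℝ) : EReal)) : a ≤ (lam : EReal) := by
  induction a using EReal.rec with
  | bot => exact bot_le
  | coe b =>
    rw [EReal.coe_le_coe_iff]
    by_contra hb
    push_neg at hb
    have := h ((b - lam) / 2) (by linarith)
    rw [EReal.coe_le_coe_iff] at this
    linarith
  | top =>
    have := h 1 one_pos
    exact ((EReal.coe_lt_top (lam + 1)).not_ge this).elim

set_option maxHeartbeats 1000000 in
/-- The convex hull of a compact set in a finite-dimensional normed space is compact. -/
lemma isCompact_convexHull_of_isCompact {E : Type*} [NormedAddCommGroup E] [NormedSpace ℝ E]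
    [FiniteDimensional ℝ E] {s : Set E} (hs : IsCompact s) : IsCompact (convexHull ℝ s) := by
  classical
  rcases s.eq_empty_or_nonempty with rfl | ⟨y₀, hy₀⟩
  · simp
  set n := Module.finrank ℝ E + 1 with hn
  have key : convexHull ℝ s =
      (fun p : (Fin n → ℝ) × (Fin n → E) => ∑ i, p.1 i • p.2 i) ''
        (stdSimplex ℝ (Fin n) ×ˢ Set.univ.pi fun _ => s) := by
    apply Set.Subset.antisymm
    · intro x hx
      obtain ⟨ι, hfin, z, w, hzs, hai, hw0, hw1, hsum⟩ :=
        eq_pos_convex_span_of_mem_convexHull hx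
      have hcard : Fintype.card ι ≤ n := by
        refine le_trans hai.card_le_finrank_succ ?_
        have := Submodule.finrank_le (vectorSpan ℝ (Set.range z))
        omega
      obtain ⟨e⟩ : Nonempty (ι ↪ Fin n) :=
        Function.Embedding.nonempty_of_card_le (by simpa using hcard)
      set w' : Fin n → ℝ := Function.extend e w 0 with hw'
      set z' : Fin n → E := Function.extend e z (fun _ => y₀) with hz'
      have hoff : ∀ j : Fin n, j ∉ Finset.univ.map e → w' j = 0 := by
        intro j hj
        rw [hw', Function.extend_apply' _ _ _ (by
          intro ⟨i, hi⟩
          exact hj (Finset.mem_map.2 ⟨i, Finset.mem_univ i, hi⟩))]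
        rfl
      have hw'sum : ∑ j, w' j = 1 := by
        rw [← Finset.sum_subset (Finset.subset_univ (Finset.univ.map e))
          (fun j _ hj => hoff j hj)]
        rw [Finset.sum_map, ← hw1]
        exact Finset.sum_congr rfl fun i _ => e.injective.extend_apply _ _ _
      have hw'0 : ∀ j, 0 ≤ w' j := by
        intro j
        by_cases hj : j ∈ Finset.univ.map e
        · obtain ⟨i, _, rfl⟩ := Finset.mem_map.1 hj
          rw [hw', e.injective.extend_apply]
          exact (hw0 i).le
        · rw [hoff j hj]
      have hz's : ∀ j, z' j ∈ s := by
        intro j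
        rcases em (∃ i, e i = j) with ⟨i, rfl⟩ | hj
        · rw [hz', e.injective.extend_apply]
          exact hzs ⟨i, rfl⟩
        · rw [hz', Function.extend_apply' _ _ _ hj]
          exact hy₀
      have hxsum : ∑ j, w' j • z' j = x := by
        rw [← Finset.sum_subset (Finset.subset_univ (Finset.univ.map e))
          (fun j _ hj => by rw [hoff j hj, zero_smul])]
        rw [Finset.sum_map, ← hsum]
        refine Finset.sum_congr rfl fun i _ => ?_
        rw [hw', hz', e.injective.extend_apply, e.injective.extend_apply]
      exact ⟨(w', z'), ⟨⟨hw'0, hw'sum⟩, fun j _ => hz's j⟩, hxsum⟩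
    · rintro x ⟨⟨w, y⟩, ⟨hw, hy⟩, rfl⟩
      have hmem := Finset.centerMass_mem_convexHull (s := s) Finset.univ
        (w := w) (fun i _ => hw.1 i) (by rw [hw.2]; norm_num)
        (z := y) (fun i _ => hy i (Set.mem_univ i))
      rwa [Finset.centerMass, hw.2, inv_one, one_smul] at hmem
  rw [key]
  have hcomp : IsCompact (stdSimplex ℝ (Fin n) ×ˢ Set.univ.pi fun _ : Fin n => s) :=
    (isCompact_stdSimplex (𝕜 := ℝ) (ι := Fin n)).prod (isCompact_univ_pi fun _ => hs)
  exact hcomp.image (continuous_finset_sum _ fun i _ =>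
    ((continuous_apply i).comp continuous_fst).smul ((continuous_apply i).comp continuous_snd))

end Helpers

/-- if `f` is coercive then `closure(L_λ(f^{lc})) ⊆ co(L_λ(f^{ls}))`, and in
particular `L_λ(f^{lc}) ⊆ co(⋂_{ε>0} closure(L_{λ+ε}(f)))`. -/
theorem stmt7 (d N : ℕ) (f : EuclideanSpace ℝ (Fin d × Fin N) → EReal)
    (hcoer : ∀ M : ℝ, ∃ R : ℝ, ∀ ξ, R ≤ ‖ξ‖ → (M : EReal) ≤ f ξ) (lam : ℝ) :
    closure {ξ | lcEnv f ξ ≤ (lam : EReal)} ⊆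
        convexHull ℝ {ξ | lscEnv f ξ ≤ (lam : EReal)} ∧
      {ξ | lcEnv f ξ ≤ (lam : EReal)} ⊆
        convexHull ℝ (⋂ ε : ℝ, ⋂ (_ : 0 < ε),
          closure {ξ | f ξ ≤ ((lam + ε : ℝ) : EReal)}) := by
  classical
  set A : ℝ → Set (EuclideanSpace ℝ (Fin d × Fin N)) := fun ε => {ξ | f ξ ≤ ((lam + ε : ℝ) : EReal)} with hA
  set S : Set (EuclideanSpace ℝ (Fin d × Fin N)) := {ξ | lscEnv f ξ ≤ (lam : EReal)} with hS
  set L : Set (EuclideanSpace ℝ (Fin d × Fin N)) := {ξ | lcEnv f ξ ≤ (lam : EReal)} with hL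
  -- monotonicity of sublevel sets
  have hAmono : ∀ ε ε' : ℝ, ε ≤ ε' → A ε ⊆ A ε' := by
    intro ε ε' h ξ hξ
    simp only [hA, Set.mem_setOf_eq] at hξ ⊢
    have hle : ((lam + ε : ℝ) : EReal) ≤ ((lam + ε' : ℝ) : EReal) := by
      exact_mod_cast (by linarith : lam + ε ≤ lam + ε')
    exact le_trans hξ hle
  -- Step 1: S ⊆ closure (A ε) for all ε > 0
  have h1 : ∀ ε : ℝ, 0 < ε → S ⊆ closure (A ε) := by
    intro ε hε x hx
    by_contra hxc
    set g : EuclideanSpace ℝ (Fin d × Fin N) → EReal := fun ξ => if ξ ∈ closure (A ε) then (⊥ : EReal) else ((lam + ε : ℝ) : EReal)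
      with hg
    have hglsc : LowerSemicontinuous g := lsc_indicator isClosed_closure _
    have hgle : g ≤ f := by
      intro ξ
      by_cases h : ξ ∈ closure (A ε)
      · simp only [hg, h, if_true]
        exact bot_le
      · simp only [hg, h, if_false]
        have hna : ξ ∉ A ε := fun h' => h (subset_closure h')
        simp only [hA, Set.mem_setOf_eq] at hna
        exact (not_le.1 hna).le
    have hge := le_lscEnv' hglsc hgle x
    rw [hg] at hge
    simp only [hxc, if_false] at hge
    have := le_trans hge hx
    rw [EReal.coe_le_coe_iff] at this
    linarith
  -- Step 2: closure (A ε) ⊆ sublevel set of lscEnv at lam + ε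
  have h2 : ∀ ε : ℝ, closure (A ε) ⊆ {ξ | lscEnv f ξ ≤ ((lam + ε : ℝ) : EReal)} := by
    intro ε
    apply closure_minimal
    · intro ξ hξ
      simp only [hA, Set.mem_setOf_eq] at hξ
      simp only [Set.mem_setOf_eq]
      exact le_trans (lscEnv_le' f ξ) hξ
    · exact (lscEnv_lsc' f).isClosed_preimage _
  -- Coercivity: a radius bounding all small sublevel sets
  obtain ⟨R, hR⟩ := hcoer (lam + 2)
  have hAball : ∀ ε : ℝ, ε ≤ 1 → A ε ⊆ Metric.closedBall 0 R := by
    intro ε hε ξ hξ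
    simp only [hA, Set.mem_setOf_eq] at hξ
    rw [Metric.mem_closedBall, dist_zero_right]
    by_contra hno
    push_neg at hno
    have h1' := hR ξ hno.le
    have hle : ((lam + ε : ℝ) : EReal) ≤ ((lam + 1 : ℝ) : EReal) := by
      exact_mod_cast (by linarith : lam + ε ≤ lam + 1)
    have h2' := le_trans h1' (le_trans hξ hle)
    rw [EReal.coe_le_coe_iff] at h2'
    linarith
  -- S is compact
  have hSclosed : IsClosed S := (lscEnv_lsc' f).isClosed_preimage _
  have hSball : S ⊆ Metric.closedBall 0 R :=
    (h1 1 one_pos).trans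
      (closure_minimal (hAball 1 le_rfl) Metric.isClosed_closedBall)
  have hScpt : IsCompact S :=
    (isCompact_closedBall (0 : EuclideanSpace ℝ (Fin d × Fin N)) R).of_isClosed_subset hSclosed hSball
  have hcoScpt : IsCompact (convexHull ℝ S) := isCompact_convexHull_of_isCompact hScpt
  have hcoSclosed : IsClosed (convexHull ℝ S) := hcoScpt.isClosed
  -- Step 5: L ⊆ convexHull (A ε) for ε > 0
  have h5 : ∀ ε : ℝ, 0 < ε → L ⊆ convexHull ℝ (A ε) := by
    intro ε hε x hx
    by_contra hxc
    set g : EuclideanSpace ℝ (Fin d × Fin N) → EReal :=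
      fun ξ => if ξ ∈ convexHull ℝ (A ε) then (⊥ : EReal) else ((lam + ε : ℝ) : EReal) with hg
    have hglc : LevelConvex g := levelConvex_indicator (convex_convexHull ℝ _) _
    have hgle : g ≤ f := by
      intro ξ
      by_cases h : ξ ∈ convexHull ℝ (A ε)
      · simp only [hg, h, if_true]
        exact bot_le
      · simp only [hg, h, if_false]
        have hna : ξ ∉ A ε := fun h' => h (subset_convexHull ℝ _ h')
        simp only [hA, Set.mem_setOf_eq] at hna
        exact (not_le.1 hna).le
    have hge := le_lcEnv' hglc hgle x
    rw [hg] at hge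
    simp only [hxc, if_false] at hge
    have := le_trans hge hx
    rw [EReal.coe_le_coe_iff] at this
    linarith
  -- Main step: L ⊆ convexHull S
  have hmain : L ⊆ convexHull ℝ S := by
    intro x hx
    by_contra hxS
    obtain ⟨ℓ, u, hu1, hu2⟩ :=
      geometric_hahn_banach_closed_point (convex_convexHull ℝ S) hcoSclosed hxS
    set Z : ℕ → Set (EuclideanSpace ℝ (Fin d × Fin N)) := fun n => closure (A (1 / (n + 1)) ∩ {y | u ≤ ℓ y}) with hZ
    have hpos : ∀ n : ℕ, (0 : ℝ) < 1 / (n + 1) := by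
      intro n
      positivity
    have hZne : ∀ n, (Z n).Nonempty := by
      intro n
      apply Set.Nonempty.closure
      by_contra hne
      rw [Set.not_nonempty_iff_eq_empty] at hne
      have hsub : A (1 / (n + 1)) ⊆ {y | ℓ y < u} := by
        intro a ha
        simp only [Set.mem_setOf_eq]
        by_contra hlt
        push_neg at hlt
        exact Set.eq_empty_iff_forall_notMem.1 hne a ⟨ha, hlt⟩
      have hcvx : Convex ℝ {y : EuclideanSpace ℝ (Fin d × Fin N) | ℓ y < u} :=
        convex_halfSpace_lt ⟨ℓ.map_add, ℓ.map_smul⟩ u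
      have := convexHull_min hsub hcvx (h5 _ (hpos n) hx)
      exact absurd this (by simp only [Set.mem_setOf_eq]; linarith)
    have hZdec : ∀ n, Z (n + 1) ⊆ Z n := by
      intro n
      apply closure_mono
      apply Set.inter_subset_inter_left
      apply hAmono
      have h0 : (0:ℝ) < (n:ℝ) + 1 := by positivity
      have h0' : (0:ℝ) < (n:ℝ) + 1 + 1 := by positivity
      rw [div_le_div_iff₀ (by push_cast; linarith) h0]
      push_cast
      nlinarith
    have hZ0 : IsCompact (Z 0) := by
      apply (isCompact_closedBall (0 : EuclideanSpace ℝ (Fin d × Fin N)) R).of_isClosed_subset isClosed_closure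
      apply closure_minimal _ Metric.isClosed_closedBall
      exact Set.inter_subset_left.trans (hAball _ (by norm_num))
    obtain ⟨y, hy⟩ := IsCompact.nonempty_iInter_of_sequence_nonempty_isCompact_isClosed Z hZdec hZne
      hZ0 (fun n => isClosed_closure)
    rw [Set.mem_iInter] at hy
    have hyu : u ≤ ℓ y := by
      have h := hy 0
      have : Z 0 ⊆ {y : EuclideanSpace ℝ (Fin d × Fin N) | u ≤ ℓ y} :=
        closure_minimal Set.inter_subset_right (isClosed_le continuous_const ℓ.continuous)
      exact this h
    have hyS : y ∈ S := by
      rw [hS, Set.mem_setOf_eq]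
      apply EReal.le_coe_of_forall_add
      intro ε hε
      obtain ⟨n, hn⟩ := exists_nat_one_div_lt hε
      have hyA : y ∈ closure (A (1 / (n + 1))) :=
        closure_mono Set.inter_subset_left (hy n)
      have : y ∈ closure (A ε) := closure_mono (hAmono _ _ hn.le) hyA
      exact h2 ε this
    have := hu1 y (subset_convexHull ℝ S hyS)
    linarith
  -- Conclusion
  have hclosure : closure L ⊆ convexHull ℝ S := closure_minimal hmain hcoSclosed
  refine ⟨hclosure, ?_⟩
  have hSsub : S ⊆ ⋂ ε : ℝ, ⋂ (_ : 0 < ε), closure (A ε) := by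
    intro x hx
    rw [Set.mem_iInter₂]
    intro ε hε
    exact h1 ε hε hx
  exact fun x hx => convexHull_mono hSsub (hmain hx)
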